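/- The chain rule for polar transforms of symmetric information holds: for any binary-input channel W with finite output alphabet, I(W⁻) + I(W⁺) = 2·I(W), and moreover I(W⁻) ≤ I(W) ≤ I(W⁺). -/

import Mathlib

open Finset Real

noncomputable section

/-- Binary symmetric channel with crossover probability `α`: `BSC α x y = W(y|x)`. -/
def BSC (α : ℝ) : Bool → Bool → ℝ := fun x y => if y = x then 1 - α else α

/-- Arıkan's minus polar transform. -/
def Wminus {Y : Type*} (W : Bool → Y → ℝ) : Bool → Y × Y → ℝ :=
  fun u₁ y => ∑ u₂ : Bool, (1/2) * W (u₁ ^^ u₂) y.1 * W u₂ y.2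

/-- Arıkan's plus polar transform; output `(y₁, y₂, u₁)`. -/
def Wplus {Y : Type*} (W : Bool → Y → ℝ) : Bool → Y × Y × Bool → ℝ :=
  fun u₂ y => (1/2) * W (y.2.2 ^^ u₂) y.1 * W u₂ y.2.1

/-- Mismatched information functional `I(W, V)`. -/
def Ifun {Y : Type*} [Fintype Y] (W V : Bool → Y → ℝ) : ℝ :=
  ∑ y : Y, ∑ x : Bool, (1/2) * W x y *
    Real.logb 2 (V x y / ((1/2) * V false y + (1/2) * V true y))

/-- Output alphabet after applying a sequence of polar transforms
(`true` = plus, `false` = minus, head applied first). -/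
def polarType (Y : Type u) : List Bool → Type u
  | [] => Y
  | true :: s => polarType (Y × Y × Bool) s
  | false :: s => polarType (Y × Y) s

/-- The synthesized channel `W^s`. -/
def polarChan {Y : Type*} (W : Bool → Y → ℝ) : (s : List Bool) → Bool → polarType Y s → ℝ
  | [] => W
  | true :: s => polarChan (Wplus W) s
  | false :: s => polarChan (Wminus W) s

instance polarFintype (Y : Type*) [Fintype Y] : ∀ s : List Bool, Fintype (polarType Y s)
  | [] => inferInstanceAs (Fintype Y)
  | true :: s => polarFintype (Y × Y × Bool) s
  | false :: s => polarFintype (Y × Y) s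


set_option linter.unusedSectionVars false
namespace PolarAux

lemma gibbs {ι : Type*} [Fintype ι] (p q : ι → ℝ) (hp : ∀ i, 0 ≤ p i) (hq : ∀ i, 0 ≤ q i)
    (hpq : ∀ i, q i = 0 → p i = 0) (hsum : ∑ i, q i ≤ ∑ i, p i) :
    0 ≤ ∑ i, p i * logb 2 (p i / q i) := by
  have hlog2 : (0:ℝ) < Real.log 2 := Real.log_pos one_lt_two
  have key : ∀ i, (p i - q i) / Real.log 2 ≤ p i * logb 2 (p i / q i) := by
    intro i
    rcases (hp i).eq_or_lt with h0 | h0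
    · rw [← h0, zero_mul, zero_sub]
      exact div_nonpos_of_nonpos_of_nonneg (neg_nonpos.2 (hq i)) hlog2.le
    · have hqi : 0 < q i := by
        rcases (hq i).eq_or_lt with h | h
        · exact absurd (hpq i h.symm) h0.ne'
        · exact h
      have h1 : Real.log (q i / p i) ≤ q i / p i - 1 :=
        Real.log_le_sub_one_of_pos (div_pos hqi h0)
      have h2 : p i * Real.log (q i / p i) ≤ q i - p i := by
        have := mul_le_mul_of_nonneg_left h1 h0.le
        have he : p i * (q i / p i - 1) = q i - p i := by field_simp
        linarith [he ▸ this]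
      have h3 : Real.log (p i / q i) = - Real.log (q i / p i) := by
        rw [← Real.log_inv, inv_div]
      have h4 : p i - q i ≤ p i * Real.log (p i / q i) := by
        rw [h3]; linarith
      rw [Real.logb, ← mul_div_assoc, div_le_div_iff_of_pos_right hlog2]
      exact h4
  calc (0:ℝ) ≤ (∑ i, p i - ∑ i, q i) / Real.log 2 :=
        div_nonneg (sub_nonneg.2 hsum) hlog2.le
    _ = ∑ i, (p i - q i) / Real.log 2 := by
        rw [← Finset.sum_sub_distrib, Finset.sum_div]
    _ ≤ _ := Finset.sum_le_sum fun i _ => key i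

variable {Y : Type*} [Fintype Y]

def qf (W : Bool → Y → ℝ) (y : Y) : ℝ := 1/2 * W false y + 1/2 * W true y

def PP (W : Bool → Y → ℝ) (u₁ u₂ : Bool) (y₁ y₂ : Y) : ℝ :=
  1/4 * W (u₁ ^^ u₂) y₁ * W u₂ y₂

def QQ (W : Bool → Y → ℝ) (u₁ u₂ : Bool) (y₁ y₂ : Y) : ℝ :=
  1/4 * W u₂ y₂ * Wminus W u₁ (y₁, y₂) / qf W y₂

lemma wminus_eval (W : Bool → Y → ℝ) (u₁ : Bool) (y₁ y₂ : Y) :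
    Wminus W u₁ (y₁, y₂) =
      1/2 * W u₁ y₁ * W false y₂ + 1/2 * W (!u₁) y₁ * W true y₂ := by
  simp [Wminus, Fintype.sum_bool]; ring

lemma wplus_eval (W : Bool → Y → ℝ) (u₁ u₂ : Bool) (y₁ y₂ : Y) :
    Wplus W u₂ (y₁, y₂, u₁) = 1/2 * (W (u₁ ^^ u₂) y₁ * W u₂ y₂) := by
  simp [Wplus]; ring

lemma denom_minus (W : Bool → Y → ℝ) (y₁ y₂ : Y) :
    1/2 * Wminus W false (y₁,y₂) + 1/2 * Wminus W true (y₁,y₂) = qf W y₁ * qf W y₂ := by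
  simp [wminus_eval, qf]; ring

lemma wminus_sum (W : Bool → Y → ℝ) (y₁ y₂ : Y) :
    Wminus W false (y₁,y₂) + Wminus W true (y₁,y₂) = 2 * (qf W y₁ * qf W y₂) := by
  have := denom_minus W y₁ y₂; linarith

lemma denom_plus (W : Bool → Y → ℝ) (y₁ y₂ : Y) (u₁ : Bool) :
    1/2 * Wplus W false (y₁,y₂,u₁) + 1/2 * Wplus W true (y₁,y₂,u₁)
      = 1/2 * Wminus W u₁ (y₁, y₂) := by
  simp [Wplus, wminus_eval]; ring

lemma half_wminus (W : Bool → Y → ℝ) (u₁ : Bool) (y₁ y₂ : Y) :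
    1/2 * Wminus W u₁ (y₁, y₂) = ∑ u₂ : Bool, PP W u₁ u₂ y₁ y₂ := by
  simp [wminus_eval, PP, Fintype.sum_bool]; cases u₁ <;> simp <;> ring

section
variable (W : Bool → Y → ℝ)
variable (hW0 : ∀ x y, 0 ≤ W x y) (hW1 : ∀ x, ∑ y, W x y = 1)
include hW0 in
lemma qf_nonneg (y : Y) : 0 ≤ qf W y := by
  have := hW0 false y; have := hW0 true y; unfold qf; linarith

include hW0 in
lemma qf_pos {b : Bool} {y : Y} (h : 0 < W b y) : 0 < qf W y := by
  have := hW0 false y; have := hW0 true y; cases b <;> unfold qf <;> linarith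

include hW0 in
lemma qf_eq_zero {y : Y} (h : qf W y = 0) (b : Bool) : W b y = 0 := by
  have := hW0 false y; have := hW0 true y; unfold qf at h; cases b <;> linarith

include hW0 in
lemma wminus_nonneg (u₁ : Bool) (y₁ y₂ : Y) : 0 ≤ Wminus W u₁ (y₁, y₂) := by
  rw [wminus_eval]
  have h1 : 0 ≤ W u₁ y₁ * W false y₂ := mul_nonneg (hW0 _ _) (hW0 _ _)
  have h2 : 0 ≤ W (!u₁) y₁ * W true y₂ := mul_nonneg (hW0 _ _) (hW0 _ _)
  linarith

include hW0 in
lemma wminus_pos {u₁ u₂ : Bool} {y₁ y₂ : Y}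
    (h : 0 < W (u₁ ^^ u₂) y₁ * W u₂ y₂) : 0 < Wminus W u₁ (y₁,y₂) := by
  rw [wminus_eval]
  have h1 : 0 ≤ W u₁ y₁ * W false y₂ := mul_nonneg (hW0 _ _) (hW0 _ _)
  have h2 : 0 ≤ W (!u₁) y₁ * W true y₂ := mul_nonneg (hW0 _ _) (hW0 _ _)
  cases u₂ <;> simp only [Bool.xor_false, Bool.xor_true] at h <;> nlinarith

include hW1 in
lemma hsum2 : (∑ y, (W false y + W true y)) = 2 := by
  rw [Finset.sum_add_distrib, hW1, hW1]; norm_num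

include hW1 in
lemma sum_qf : ∑ y, qf W y = 1 := by
  simp only [qf]
  rw [Finset.sum_add_distrib, ← Finset.mul_sum, ← Finset.mul_sum, hW1, hW1]; norm_num

include hW0 in
lemma conserve_term (u₁ u₂ : Bool) (y₁ y₂ : Y) :
    PP W u₁ u₂ y₁ y₂ * logb 2 (Wminus W u₁ (y₁,y₂) / (qf W y₁ * qf W y₂))
      + PP W u₁ u₂ y₁ y₂ * logb 2 (W (u₁ ^^ u₂) y₁ * W u₂ y₂ / Wminus W u₁ (y₁,y₂))
    = PP W u₁ u₂ y₁ y₂ * logb 2 (W (u₁ ^^ u₂) y₁ / qf W y₁)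
      + PP W u₁ u₂ y₁ y₂ * logb 2 (W u₂ y₂ / qf W y₂) := by
  by_cases ha : W (u₁ ^^ u₂) y₁ = 0
  · simp [PP, ha]
  by_cases hb : W u₂ y₂ = 0
  · simp [PP, hb]
  have ha' : 0 < W (u₁ ^^ u₂) y₁ := (hW0 _ _).lt_of_ne (Ne.symm ha)
  have hb' : 0 < W u₂ y₂ := (hW0 _ _).lt_of_ne (Ne.symm hb)
  have hq1 : 0 < qf W y₁ := qf_pos W hW0 ha'
  have hq2 : 0 < qf W y₂ := qf_pos W hW0 hb'
  have hm : 0 < Wminus W u₁ (y₁,y₂) := wminus_pos W hW0 (mul_pos ha' hb')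
  rw [Real.logb_div hm.ne' (mul_pos hq1 hq2).ne',
      Real.logb_mul hq1.ne' hq2.ne',
      Real.logb_div (mul_pos ha' hb').ne' hm.ne',
      Real.logb_mul ha'.ne' hb'.ne',
      Real.logb_div ha'.ne' hq1.ne',
      Real.logb_div hb'.ne' hq2.ne']
  ring

include hW0 in
lemma ineq_term (u₁ u₂ : Bool) (y₁ y₂ : Y) :
    PP W u₁ u₂ y₁ y₂ * logb 2 (W (u₁ ^^ u₂) y₁ * W u₂ y₂ / Wminus W u₁ (y₁,y₂))
      - PP W u₁ u₂ y₁ y₂ * logb 2 (W u₂ y₂ / qf W y₂)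
    = PP W u₁ u₂ y₁ y₂ * logb 2 (PP W u₁ u₂ y₁ y₂ / QQ W u₁ u₂ y₁ y₂) := by
  by_cases ha : W (u₁ ^^ u₂) y₁ = 0
  · simp [PP, ha]
  by_cases hb : W u₂ y₂ = 0
  · simp [PP, hb]
  have ha' : 0 < W (u₁ ^^ u₂) y₁ := (hW0 _ _).lt_of_ne (Ne.symm ha)
  have hb' : 0 < W u₂ y₂ := (hW0 _ _).lt_of_ne (Ne.symm hb)
  have hq2 : 0 < qf W y₂ := qf_pos W hW0 hb'
  have hm : 0 < Wminus W u₁ (y₁,y₂) := wminus_pos W hW0 (mul_pos ha' hb')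
  have hratio : PP W u₁ u₂ y₁ y₂ / QQ W u₁ u₂ y₁ y₂
      = W (u₁ ^^ u₂) y₁ * qf W y₂ / Wminus W u₁ (y₁,y₂) := by
    unfold PP QQ
    field_simp
  rw [hratio,
      Real.logb_div (mul_pos ha' hb').ne' hm.ne',
      Real.logb_mul ha'.ne' hb'.ne',
      Real.logb_div hb'.ne' hq2.ne',
      Real.logb_div (mul_pos ha' hq2).ne' hm.ne',
      Real.logb_mul ha'.ne' hq2.ne']
  ring

lemma expand_minus :
    Ifun (Wminus W) (Wminus W)
      = ∑ y₁ : Y, ∑ y₂ : Y, ∑ u₁ : Bool, ∑ u₂ : Bool,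
          PP W u₁ u₂ y₁ y₂ * logb 2 (Wminus W u₁ (y₁,y₂) / (qf W y₁ * qf W y₂)) := by
  rw [Ifun, Fintype.sum_prod_type]
  refine Finset.sum_congr rfl fun y₁ _ => Finset.sum_congr rfl fun y₂ _ => ?_
  rw [denom_minus]
  have hf := half_wminus W false y₁ y₂
  have ht := half_wminus W true y₁ y₂
  simp only [Fintype.sum_bool] at hf ht ⊢
  linear_combination
    logb 2 (Wminus W true (y₁,y₂) / (qf W y₁ * qf W y₂)) * ht
    + logb 2 (Wminus W false (y₁,y₂) / (qf W y₁ * qf W y₂)) * hf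

lemma expand_plus :
    Ifun (Wplus W) (Wplus W)
      = ∑ y₁ : Y, ∑ y₂ : Y, ∑ u₁ : Bool, ∑ u₂ : Bool,
          PP W u₁ u₂ y₁ y₂
            * logb 2 (W (u₁ ^^ u₂) y₁ * W u₂ y₂ / Wminus W u₁ (y₁,y₂)) := by
  rw [Ifun, Fintype.sum_prod_type]
  refine Finset.sum_congr rfl fun y₁ _ => ?_
  rw [Fintype.sum_prod_type]
  refine Finset.sum_congr rfl fun y₂ _ => Finset.sum_congr rfl fun u₁ _ =>
    Finset.sum_congr rfl fun u₂ _ => ?_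
  rw [denom_plus, wplus_eval,
      mul_div_mul_left _ _ (by norm_num : (1/2:ℝ) ≠ 0)]
  unfold PP; ring

include hW1 in
lemma expand_one :
    (∑ y₁ : Y, ∑ y₂ : Y, ∑ u₁ : Bool, ∑ u₂ : Bool,
        PP W u₁ u₂ y₁ y₂ * logb 2 (W (u₁ ^^ u₂) y₁ / qf W y₁)) = Ifun W W := by
  rw [Ifun]
  refine Finset.sum_congr rfl fun y₁ _ => ?_
  have h1 : ∀ y₂ : Y, (∑ u₁ : Bool, ∑ u₂ : Bool,
      PP W u₁ u₂ y₁ y₂ * logb 2 (W (u₁ ^^ u₂) y₁ / qf W y₁))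
      = (W false y₂ + W true y₂) *
        (1/4 * W false y₁ * logb 2 (W false y₁ / qf W y₁)
          + 1/4 * W true y₁ * logb 2 (W true y₁ / qf W y₁)) := by
    intro y₂
    simp only [Fintype.sum_bool, PP, Bool.xor_false, Bool.xor_true, Bool.not_true,
      Bool.not_false]
    ring
  rw [Finset.sum_congr rfl fun y₂ _ => h1 y₂, ← Finset.sum_mul, hsum2 W hW1]
  simp only [Fintype.sum_bool, qf]
  ring

include hW1 in
lemma expand_two :
    (∑ y₁ : Y, ∑ y₂ : Y, ∑ u₁ : Bool, ∑ u₂ : Bool,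
        PP W u₁ u₂ y₁ y₂ * logb 2 (W u₂ y₂ / qf W y₂)) = Ifun W W := by
  rw [Ifun, Finset.sum_comm]
  refine Finset.sum_congr rfl fun y₂ _ => ?_
  have h1 : ∀ y₁ : Y, (∑ u₁ : Bool, ∑ u₂ : Bool,
      PP W u₁ u₂ y₁ y₂ * logb 2 (W u₂ y₂ / qf W y₂))
      = (W false y₁ + W true y₁) *
        (1/4 * W false y₂ * logb 2 (W false y₂ / qf W y₂)
          + 1/4 * W true y₂ * logb 2 (W true y₂ / qf W y₂)) := by
    intro y₁
    simp only [Fintype.sum_bool, PP, Bool.xor_false, Bool.xor_true, Bool.not_true,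
      Bool.not_false]
    ring
  rw [Finset.sum_congr rfl fun y₁ _ => h1 y₁, ← Finset.sum_mul, hsum2 W hW1]
  simp only [Fintype.sum_bool, qf]
  ring

include hW1 in
lemma sumP : (∑ y₁ : Y, ∑ y₂ : Y, ∑ u₁ : Bool, ∑ u₂ : Bool, PP W u₁ u₂ y₁ y₂) = 1 := by
  have h1 : ∀ y₁ y₂ : Y, (∑ u₁ : Bool, ∑ u₂ : Bool, PP W u₁ u₂ y₁ y₂)
      = (W false y₁ + W true y₁) * (1/4 * (W false y₂ + W true y₂)) := by
    intro y₁ y₂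
    simp only [Fintype.sum_bool, PP, Bool.xor_false, Bool.xor_true, Bool.not_true,
      Bool.not_false]
    ring
  rw [Finset.sum_congr rfl fun y₁ _ => Finset.sum_congr rfl fun y₂ _ => h1 y₁ y₂]
  have h2 : ∀ y₁ : Y, (∑ y₂ : Y, (W false y₁ + W true y₁) * (1/4 * (W false y₂ + W true y₂)))
      = (W false y₁ + W true y₁) * (1/2) := by
    intro y₁; rw [← Finset.mul_sum, ← Finset.mul_sum, hsum2 W hW1]; norm_num
  rw [Finset.sum_congr rfl fun y₁ _ => h2 y₁, ← Finset.sum_mul, hsum2 W hW1]; norm_num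

include hW0 hW1 in
lemma sumQ : (∑ y₁ : Y, ∑ y₂ : Y, ∑ u₁ : Bool, ∑ u₂ : Bool, QQ W u₁ u₂ y₁ y₂) = 1 := by
  have hkey : ∀ (u₂ : Bool) (y₁ y₂ : Y),
      QQ W false u₂ y₁ y₂ + QQ W true u₂ y₁ y₂ = qf W y₁ * (1/2 * W u₂ y₂) := by
    intro u₂ y₁ y₂
    rcases eq_or_ne (qf W y₂) 0 with h0 | h0
    · have hb := qf_eq_zero W hW0 h0 u₂
      simp [QQ, hb]
    · unfold QQ
      rw [← add_div]
      have h3 : 1/4 * W u₂ y₂ * Wminus W false (y₁,y₂) + 1/4 * W u₂ y₂ * Wminus W true (y₁,y₂)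
          = qf W y₁ * (1/2 * W u₂ y₂) * qf W y₂ := by
        linear_combination (1/4 * W u₂ y₂) * wminus_sum W y₁ y₂
      rw [h3, mul_div_assoc, div_self h0, mul_one]
  have h1 : ∀ y₁ y₂ : Y, (∑ u₁ : Bool, ∑ u₂ : Bool, QQ W u₁ u₂ y₁ y₂)
      = qf W y₁ * (1/2 * (W false y₂ + W true y₂)) := by
    intro y₁ y₂
    have hf := hkey false y₁ y₂; have ht := hkey true y₁ y₂
    simp only [Fintype.sum_bool]
    linarith
  rw [Finset.sum_congr rfl fun y₁ _ => Finset.sum_congr rfl fun y₂ _ => h1 y₁ y₂]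
  have h2 : ∀ y₁ : Y, (∑ y₂ : Y, qf W y₁ * (1/2 * (W false y₂ + W true y₂))) = qf W y₁ := by
    intro y₁; rw [← Finset.mul_sum, ← Finset.mul_sum, hsum2 W hW1]; norm_num
  rw [Finset.sum_congr rfl fun y₁ _ => h2 y₁, sum_qf W hW1]

lemma hsplit (f g : Bool → Bool → Y → Y → ℝ) :
    (∑ y₁ : Y, ∑ y₂ : Y, ∑ u₁ : Bool, ∑ u₂ : Bool, (f u₁ u₂ y₁ y₂ + g u₁ u₂ y₁ y₂))
      = (∑ y₁ : Y, ∑ y₂ : Y, ∑ u₁ : Bool, ∑ u₂ : Bool, f u₁ u₂ y₁ y₂)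
        + (∑ y₁ : Y, ∑ y₂ : Y, ∑ u₁ : Bool, ∑ u₂ : Bool, g u₁ u₂ y₁ y₂) := by
  simp only [Finset.sum_add_distrib]

lemma hsub (f g : Bool → Bool → Y → Y → ℝ) :
    (∑ y₁ : Y, ∑ y₂ : Y, ∑ u₁ : Bool, ∑ u₂ : Bool, (f u₁ u₂ y₁ y₂ - g u₁ u₂ y₁ y₂))
      = (∑ y₁ : Y, ∑ y₂ : Y, ∑ u₁ : Bool, ∑ u₂ : Bool, f u₁ u₂ y₁ y₂)
        - (∑ y₁ : Y, ∑ y₂ : Y, ∑ u₁ : Bool, ∑ u₂ : Bool, g u₁ u₂ y₁ y₂) := by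
  simp only [Finset.sum_sub_distrib]


end
end PolarAux

open PolarAux in
/-- conservation `I(W⁻) + I(W⁺) = 2 I(W)` and the ordering
`I(W⁻) ≤ I(W) ≤ I(W⁺)` for the symmetric information under polar transforms. -/

theorem symmetric_info_polar_chain {Y : Type*} [Fintype Y] (W : Bool → Y → ℝ)
    (hW0 : ∀ x y, 0 ≤ W x y) (hW1 : ∀ x, ∑ y, W x y = 1) :
    Ifun (Wminus W) (Wminus W) + Ifun (Wplus W) (Wplus W) = 2 * Ifun W W ∧
    Ifun (Wminus W) (Wminus W) ≤ Ifun W W ∧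
    Ifun W W ≤ Ifun (Wplus W) (Wplus W) := by
  classical
  have hcons : Ifun (Wminus W) (Wminus W) + Ifun (Wplus W) (Wplus W) = 2 * Ifun W W := by
    calc Ifun (Wminus W) (Wminus W) + Ifun (Wplus W) (Wplus W)
        = (∑ y₁ : Y, ∑ y₂ : Y, ∑ u₁ : Bool, ∑ u₂ : Bool,
            PP W u₁ u₂ y₁ y₂ * logb 2 (Wminus W u₁ (y₁,y₂) / (qf W y₁ * qf W y₂)))
          + (∑ y₁ : Y, ∑ y₂ : Y, ∑ u₁ : Bool, ∑ u₂ : Bool,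
            PP W u₁ u₂ y₁ y₂ * logb 2 (W (u₁ ^^ u₂) y₁ * W u₂ y₂ / Wminus W u₁ (y₁,y₂))) := by
          rw [expand_minus W, expand_plus W]
      _ = ∑ y₁ : Y, ∑ y₂ : Y, ∑ u₁ : Bool, ∑ u₂ : Bool,
            (PP W u₁ u₂ y₁ y₂ * logb 2 (Wminus W u₁ (y₁,y₂) / (qf W y₁ * qf W y₂))
              + PP W u₁ u₂ y₁ y₂ * logb 2 (W (u₁ ^^ u₂) y₁ * W u₂ y₂ / Wminus W u₁ (y₁,y₂))) :=
          (hsplit _ _).symm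
      _ = ∑ y₁ : Y, ∑ y₂ : Y, ∑ u₁ : Bool, ∑ u₂ : Bool,
            (PP W u₁ u₂ y₁ y₂ * logb 2 (W (u₁ ^^ u₂) y₁ / qf W y₁)
              + PP W u₁ u₂ y₁ y₂ * logb 2 (W u₂ y₂ / qf W y₂)) :=
          Finset.sum_congr rfl fun y₁ _ => Finset.sum_congr rfl fun y₂ _ =>
            Finset.sum_congr rfl fun u₁ _ => Finset.sum_congr rfl fun u₂ _ =>
              conserve_term W hW0 u₁ u₂ y₁ y₂
      _ = (∑ y₁ : Y, ∑ y₂ : Y, ∑ u₁ : Bool, ∑ u₂ : Bool,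
            PP W u₁ u₂ y₁ y₂ * logb 2 (W (u₁ ^^ u₂) y₁ / qf W y₁))
          + (∑ y₁ : Y, ∑ y₂ : Y, ∑ u₁ : Bool, ∑ u₂ : Bool,
            PP W u₁ u₂ y₁ y₂ * logb 2 (W u₂ y₂ / qf W y₂)) := hsplit _ _
      _ = 2 * Ifun W W := by rw [expand_one W hW1, expand_two W hW1]; ring
  have hplus : Ifun W W ≤ Ifun (Wplus W) (Wplus W) := by
    have hp : ∀ t : Y × Y × Bool × Bool, 0 ≤ PP W t.2.2.1 t.2.2.2 t.1 t.2.1 := by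
      intro t; unfold PP
      exact mul_nonneg (mul_nonneg (by norm_num) (hW0 _ _)) (hW0 _ _)
    have hq : ∀ t : Y × Y × Bool × Bool, 0 ≤ QQ W t.2.2.1 t.2.2.2 t.1 t.2.1 := by
      intro t; unfold QQ
      exact div_nonneg (mul_nonneg (mul_nonneg (by norm_num) (hW0 _ _))
        (wminus_nonneg W hW0 _ _ _)) (qf_nonneg W hW0 _)
    have hpq : ∀ t : Y × Y × Bool × Bool,
        QQ W t.2.2.1 t.2.2.2 t.1 t.2.1 = 0 → PP W t.2.2.1 t.2.2.2 t.1 t.2.1 = 0 := by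
      rintro ⟨y₁, y₂, u₁, u₂⟩ h
      by_contra hne
      dsimp only at h hne
      unfold PP at hne
      rcases mul_ne_zero_iff.1 hne with ⟨h1, hb⟩
      rcases mul_ne_zero_iff.1 h1 with ⟨-, ha⟩
      have ha' : 0 < W (u₁ ^^ u₂) y₁ := (hW0 _ _).lt_of_ne (Ne.symm ha)
      have hb' : 0 < W u₂ y₂ := (hW0 _ _).lt_of_ne (Ne.symm hb)
      have hq2 : 0 < qf W y₂ := qf_pos W hW0 hb'
      have hm : 0 < Wminus W u₁ (y₁,y₂) := wminus_pos W hW0 (mul_pos ha' hb')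
      have hQ : 0 < QQ W u₁ u₂ y₁ y₂ := by
        unfold QQ
        exact div_pos (mul_pos (mul_pos (by norm_num) hb') hm) hq2
      exact hQ.ne' h
    have hps : (∑ t : Y × Y × Bool × Bool, PP W t.2.2.1 t.2.2.2 t.1 t.2.1) = 1 := by
      simp only [Fintype.sum_prod_type]
      exact sumP W hW1
    have hqs : (∑ t : Y × Y × Bool × Bool, QQ W t.2.2.1 t.2.2.2 t.1 t.2.1) = 1 := by
      simp only [Fintype.sum_prod_type]
      exact sumQ W hW0 hW1
    have hg := gibbs (fun t : Y × Y × Bool × Bool => PP W t.2.2.1 t.2.2.2 t.1 t.2.1)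
      (fun t => QQ W t.2.2.1 t.2.2.2 t.1 t.2.1) hp hq hpq (le_of_eq (hqs.trans hps.symm))
    have hg' : 0 ≤ ∑ y₁ : Y, ∑ y₂ : Y, ∑ u₁ : Bool, ∑ u₂ : Bool,
        PP W u₁ u₂ y₁ y₂ * logb 2 (PP W u₁ u₂ y₁ y₂ / QQ W u₁ u₂ y₁ y₂) := by
      simpa only [Fintype.sum_prod_type] using hg
    have hdiff : Ifun (Wplus W) (Wplus W) - Ifun W W
        = ∑ y₁ : Y, ∑ y₂ : Y, ∑ u₁ : Bool, ∑ u₂ : Bool,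
            PP W u₁ u₂ y₁ y₂ * logb 2 (PP W u₁ u₂ y₁ y₂ / QQ W u₁ u₂ y₁ y₂) := by
      calc Ifun (Wplus W) (Wplus W) - Ifun W W
          = (∑ y₁ : Y, ∑ y₂ : Y, ∑ u₁ : Bool, ∑ u₂ : Bool,
              PP W u₁ u₂ y₁ y₂ * logb 2 (W (u₁ ^^ u₂) y₁ * W u₂ y₂ / Wminus W u₁ (y₁,y₂)))
            - (∑ y₁ : Y, ∑ y₂ : Y, ∑ u₁ : Bool, ∑ u₂ : Bool,
              PP W u₁ u₂ y₁ y₂ * logb 2 (W u₂ y₂ / qf W y₂)) := by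
            rw [expand_plus W, expand_two W hW1]
        _ = ∑ y₁ : Y, ∑ y₂ : Y, ∑ u₁ : Bool, ∑ u₂ : Bool,
              (PP W u₁ u₂ y₁ y₂ * logb 2 (W (u₁ ^^ u₂) y₁ * W u₂ y₂ / Wminus W u₁ (y₁,y₂))
                - PP W u₁ u₂ y₁ y₂ * logb 2 (W u₂ y₂ / qf W y₂)) := (hsub _ _).symm
        _ = _ := Finset.sum_congr rfl fun y₁ _ => Finset.sum_congr rfl fun y₂ _ =>
              Finset.sum_congr rfl fun u₁ _ => Finset.sum_congr rfl fun u₂ _ =>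
                ineq_term W hW0 u₁ u₂ y₁ y₂
    linarith
  exact ⟨hcons, by linarith, hplus⟩


end
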